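/- Let Y₁, …, Y_m be i.i.d. ℝ^d-valued random variables with E[Y₁] = 0 and E[exp(a|Y₁|²)] ≤ 2 for some constant a > 0, where |·| is the Euclidean norm. Then there exists a constant β > 0 depending only on a and d (not on m) such that for every integer p ≥ 1, E[ |Y₁ + ⋯ + Y_m|^{2p} ] ≤ p! (β m)^p. -/

import Mathlib

open MeasureTheory ProbabilityTheory

lemma aux_key_exp {v : ℝ} (hv : 0 ≤ v) : Real.exp v ≤ 1 + v * Real.exp v := by
  have h := mul_le_mul_of_nonneg_right (Real.add_one_le_exp (-v)) (Real.exp_pos v).le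
  rw [← Real.exp_add, neg_add_cancel, Real.exp_zero] at h
  nlinarith

lemma aux_exp_le (u : ℝ) : Real.exp u ≤ 1 + u + u ^ 2 * Real.exp |u| := by
  rcases le_or_gt 0 u with hu | hu
  · rw [abs_of_nonneg hu]
    have h1 := aux_key_exp hu
    have h2 := mul_le_mul_of_nonneg_left h1 hu
    nlinarith
  · rw [abs_of_neg hu]
    set v := -u with hv
    have hv0 : 0 < v := by simp [hv]; linarith
    have hEF : Real.exp u * Real.exp v = 1 := by
      rw [← Real.exp_add]; simp [hv]
    have hF1 : 1 + v ≤ Real.exp v := by linarith [Real.add_one_le_exp v]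
    have hE0 : 0 < Real.exp u := Real.exp_pos u
    have hF0 : (1:ℝ) ≤ Real.exp v := by nlinarith
    -- E * (1 + v) ≤ 1
    have hE1 : Real.exp u * (1 + v) ≤ 1 := by
      calc Real.exp u * (1 + v) ≤ Real.exp u * Real.exp v :=
            mul_le_mul_of_nonneg_left hF1 hE0.le
        _ = 1 := hEF
    have goal' : Real.exp u ≤ 1 - v + v ^ 2 * Real.exp v := by
      have h3 : Real.exp u ≤ 1 - v + v ^ 2 := by nlinarith
      nlinarith
    have : u ^ 2 = v ^ 2 := by rw [hv]; ring
    linarith [goal', this ▸ goal']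

lemma aux_fact (p : ℕ) : (2 * p).factorial ≤ 4 ^ p * p.factorial * p.factorial := by
  have h1 : (2 * p).choose p * p.factorial * p.factorial = (2 * p).factorial := by
    have := Nat.choose_mul_factorial_mul_factorial (show p ≤ 2 * p by omega)
    have h2p : 2 * p - p = p := by omega
    rw [h2p] at this
    exact this
  have h2 : (2 * p).choose p ≤ 4 ^ p := by
    calc (2 * p).choose p ≤ (2 * p + 1).choose p := Nat.choose_le_choose p (by omega)
      _ ≤ 4 ^ p := Nat.choose_middle_le_pow p
  calc (2 * p).factorial = (2 * p).choose p * p.factorial * p.factorial := h1.symm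
    _ ≤ 4 ^ p * p.factorial * p.factorial := by
        exact Nat.mul_le_mul_right _ (Nat.mul_le_mul_right _ h2)

lemma exp_sq_integrable {Ω : Type} [MeasurableSpace Ω] {μ : Measure Ω} {a : ℝ} {g : Ω → ℝ}
    (hg : Measurable g) (hb : ∫⁻ ω, ENNReal.ofReal (Real.exp (a * g ω)) ∂μ ≤ 2) :
    Integrable (fun ω => Real.exp (a * g ω)) μ ∧ ∫ ω, Real.exp (a * g ω) ∂μ ≤ 2 := by
  have hm : Measurable fun ω => Real.exp (a * g ω) := (hg.const_mul a).exp
  have hnn : 0 ≤ᵐ[μ] fun ω => Real.exp (a * g ω) :=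
    Filter.Eventually.of_forall fun ω => (Real.exp_pos _).le
  have hfin : HasFiniteIntegral (fun ω => Real.exp (a * g ω)) μ := by
    rw [hasFiniteIntegral_iff_ofReal hnn]
    exact lt_of_le_of_lt hb (by norm_num)
  refine ⟨⟨hm.aestronglyMeasurable, hfin⟩, ?_⟩
  rw [integral_eq_lintegral_of_nonneg_ae hnn hm.aestronglyMeasurable]
  calc (∫⁻ ω, ENNReal.ofReal (Real.exp (a * g ω)) ∂μ).toReal
      ≤ (2 : ENNReal).toReal := ENNReal.toReal_mono (by norm_num) hb
    _ = 2 := by norm_num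


lemma mgf_aux {Ω : Type} [MeasurableSpace Ω] {μ : Measure Ω} [IsProbabilityMeasure μ]
    {a : ℝ} (ha : 0 < a) {X g : Ω → ℝ} (hX : Measurable X)
    (hXg : ∀ ω, X ω ^ 2 ≤ g ω) (hg0 : ∀ ω, 0 ≤ g ω)
    (hgint : Integrable (fun ω => Real.exp (a * g ω)) μ)
    (hg2 : ∫ ω, Real.exp (a * g ω) ∂μ ≤ 2)
    (hXint : Integrable X μ) (hX0 : ∫ ω, X ω ∂μ = 0) (t : ℝ) :
    Integrable (fun ω => Real.exp (t * X ω)) μ ∧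
      mgf X μ t ≤ Real.exp (8 / a * t ^ 2) := by
  have hlog2 : (0.6931471803 : ℝ) < Real.log 2 := Real.log_two_gt_d9
  have hlog2' : Real.log 2 < 0.6931471808 := Real.log_two_lt_d9
  have habs : ∀ ω, |t * X ω| ≤ t ^ 2 / a + a / 4 * g ω := by
    intro ω
    have h1 : |t * X ω| = |t| * |X ω| := abs_mul t (X ω)
    have h3 : |X ω| ^ 2 ≤ g ω := by rw [sq_abs]; exact hXg ω
    have h4 : (2 * |t| - a * |X ω|) ^ 2 ≥ 0 := sq_nonneg _
    have ht : |t| ^ 2 = t ^ 2 := sq_abs t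
    rw [h1, ← sub_nonneg]
    have h6 : t ^ 2 / a + a / 4 * g ω - |t| * |X ω| =
        (4 * t ^ 2 + a ^ 2 * g ω - 4 * a * (|t| * |X ω|)) / (4 * a) := by
      field_simp
    rw [h6]
    apply div_nonneg _ (by linarith)
    nlinarith [mul_le_mul_of_nonneg_left h3 (sq_nonneg a), abs_nonneg t, abs_nonneg (X ω)]
  have hdom : ∀ ω, Real.exp (t * X ω) ≤ Real.exp (t ^ 2 / a) * Real.exp (a * g ω) := by
    intro ω
    rw [← Real.exp_add]
    apply Real.exp_le_exp.2
    have h5 : a / 4 * g ω ≤ a * g ω := by nlinarith [hg0 ω]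
    calc t * X ω ≤ |t * X ω| := le_abs_self _
      _ ≤ t ^ 2 / a + a / 4 * g ω := habs ω
      _ ≤ t ^ 2 / a + a * g ω := by linarith
  have hmeas_exp : Measurable fun ω => Real.exp (t * X ω) := (hX.const_mul t).exp
  have hint_exp : Integrable (fun ω => Real.exp (t * X ω)) μ := by
    apply Integrable.mono (hgint.const_mul (Real.exp (t ^ 2 / a))) hmeas_exp.aestronglyMeasurable
    apply Filter.Eventually.of_forall
    intro ω
    rw [Real.norm_eq_abs, Real.norm_eq_abs, abs_of_pos (Real.exp_pos _), abs_of_pos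
      (by positivity)]
    exact hdom ω
  refine ⟨hint_exp, ?_⟩
  rcases le_or_gt (t ^ 2) (a / 4) with hsm | hlg
  · -- small t
    have hq : ∀ ω, Real.exp (t * X ω) ≤ 1 + t * X ω + 4 * t ^ 2 / a * Real.exp (a * g ω) := by
      intro ω
      have h1 := aux_exp_le (t * X ω)
      have hXsq : X ω ^ 2 ≤ 2 / a * Real.exp (a / 2 * g ω) := by
        have hz : a / 2 * X ω ^ 2 ≤ Real.exp (a / 2 * X ω ^ 2) := by
          linarith [Real.add_one_le_exp (a / 2 * X ω ^ 2)]
        have hz2 : Real.exp (a / 2 * X ω ^ 2) ≤ Real.exp (a / 2 * g ω) :=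
          Real.exp_le_exp.2 (by nlinarith [hXg ω])
        have hz3 : a / 2 * X ω ^ 2 ≤ Real.exp (a / 2 * g ω) := le_trans hz hz2
        rw [div_mul_eq_mul_div, le_div_iff₀ ha]
        nlinarith
      have hexpabs : Real.exp |t * X ω| ≤ Real.exp (t ^ 2 / a) * Real.exp (a / 4 * g ω) := by
        rw [← Real.exp_add]
        exact Real.exp_le_exp.2 (habs ω)
      have hexp14 : Real.exp (t ^ 2 / a) ≤ 2 := by
        calc Real.exp (t ^ 2 / a) ≤ Real.exp (Real.log 2) := by
              apply Real.exp_le_exp.2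
              have : t ^ 2 / a ≤ 1 / 4 := by
                rw [div_le_div_iff₀ ha (by norm_num)]; linarith
              linarith
          _ = 2 := Real.exp_log (by norm_num)
      have hsq : (t * X ω) ^ 2 * Real.exp |t * X ω| ≤ 4 * t ^ 2 / a * Real.exp (a * g ω) := by
        calc (t * X ω) ^ 2 * Real.exp |t * X ω|
            = t ^ 2 * X ω ^ 2 * Real.exp |t * X ω| := by ring_nf
          _ ≤ t ^ 2 * (2 / a * Real.exp (a / 2 * g ω)) * (Real.exp (t ^ 2 / a) *
              Real.exp (a / 4 * g ω)) := by
              apply mul_le_mul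
              · exact mul_le_mul_of_nonneg_left hXsq (sq_nonneg t)
              · exact hexpabs
              · positivity
              · positivity
          _ ≤ t ^ 2 * (2 / a * Real.exp (a / 2 * g ω)) * (2 * Real.exp (a / 4 * g ω)) := by
              apply mul_le_mul_of_nonneg_left _ (by positivity)
              exact mul_le_mul_of_nonneg_right hexp14 (Real.exp_pos _).le
          _ = 4 * t ^ 2 / a * (Real.exp (a / 2 * g ω) * Real.exp (a / 4 * g ω)) := by ring
          _ ≤ 4 * t ^ 2 / a * Real.exp (a * g ω) := by
              apply mul_le_mul_of_nonneg_left _ (by positivity)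
              rw [← Real.exp_add]
              apply Real.exp_le_exp.2
              nlinarith [hg0 ω]
      linarith
    have hi1 : Integrable (fun ω => 1 + t * X ω) μ :=
      (integrable_const 1).add (hXint.const_mul t)
    have hi2 : Integrable (fun ω => 4 * t ^ 2 / a * Real.exp (a * g ω)) μ :=
      hgint.const_mul _
    have hRHSint : Integrable (fun ω => 1 + t * X ω + 4 * t ^ 2 / a * Real.exp (a * g ω)) μ :=
      hi1.add hi2
    have hmono := integral_mono hint_exp hRHSint hq
    have hcalc : ∫ ω, (1 + t * X ω + 4 * t ^ 2 / a * Real.exp (a * g ω)) ∂μ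
        = 1 + t * ∫ ω, X ω ∂μ + 4 * t ^ 2 / a * ∫ ω, Real.exp (a * g ω) ∂μ := by
      rw [integral_add hi1 hi2, integral_add (integrable_const 1) (hXint.const_mul t),
        integral_const, integral_const_mul, integral_const_mul]
      simp
    rw [hcalc, hX0, mul_zero, add_zero] at hmono
    have h8 : 4 * t ^ 2 / a * ∫ ω, Real.exp (a * g ω) ∂μ ≤ 8 / a * t ^ 2 := by
      have hc : (0:ℝ) ≤ 4 * t ^ 2 / a := by positivity
      calc 4 * t ^ 2 / a * ∫ ω, Real.exp (a * g ω) ∂μ ≤ 4 * t ^ 2 / a * 2 :=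
            mul_le_mul_of_nonneg_left hg2 hc
        _ = 8 / a * t ^ 2 := by ring
    calc mgf X μ t = ∫ ω, Real.exp (t * X ω) ∂μ := rfl
      _ ≤ 1 + 4 * t ^ 2 / a * ∫ ω, Real.exp (a * g ω) ∂μ := hmono
      _ ≤ 1 + 8 / a * t ^ 2 := by linarith
      _ ≤ Real.exp (8 / a * t ^ 2) := by linarith [Real.add_one_le_exp (8 / a * t ^ 2)]
  · -- large t
    have hmono := integral_mono hint_exp (hgint.const_mul (Real.exp (t ^ 2 / a))) hdom
    rw [integral_const_mul] at hmono
    have h2le : Real.exp (t ^ 2 / a) * ∫ ω, Real.exp (a * g ω) ∂μ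
        ≤ Real.exp (t ^ 2 / a) * 2 := mul_le_mul_of_nonneg_left hg2 (Real.exp_pos _).le
    have h2exp : (2:ℝ) ≤ Real.exp (4 * Real.log 2 / a * t ^ 2) := by
      have hkey : Real.log 2 ≤ 4 * Real.log 2 / a * t ^ 2 := by
        rw [div_mul_eq_mul_div, le_div_iff₀ ha]
        nlinarith [mul_nonneg (by linarith : (0:ℝ) ≤ Real.log 2)
          (by linarith : (0:ℝ) ≤ t ^ 2 - a / 4)]
      calc (2:ℝ) = Real.exp (Real.log 2) := (Real.exp_log (by norm_num)).symm
        _ ≤ _ := Real.exp_le_exp.2 hkey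
    have hfin : Real.exp (t ^ 2 / a) * 2 ≤ Real.exp (8 / a * t ^ 2) := by
      calc Real.exp (t ^ 2 / a) * 2 ≤ Real.exp (t ^ 2 / a) *
          Real.exp (4 * Real.log 2 / a * t ^ 2) :=
            mul_le_mul_of_nonneg_left h2exp (Real.exp_pos _).le
        _ = Real.exp (t ^ 2 / a + 4 * Real.log 2 / a * t ^ 2) := (Real.exp_add _ _).symm
        _ ≤ Real.exp (8 / a * t ^ 2) := by
            apply Real.exp_le_exp.2
            rw [div_mul_eq_mul_div, div_mul_eq_mul_div, ← add_div, div_le_div_iff₀ ha ha]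
            nlinarith [mul_nonneg (mul_nonneg (sq_nonneg t) ha.le)
              (by linarith : (0:ℝ) ≤ 7 - 4 * Real.log 2)]
    calc mgf X μ t = ∫ ω, Real.exp (t * X ω) ∂μ := rfl
      _ ≤ Real.exp (t ^ 2 / a) * ∫ ω, Real.exp (a * g ω) ∂μ := hmono
      _ ≤ Real.exp (t ^ 2 / a) * 2 := h2le
      _ ≤ Real.exp (8 / a * t ^ 2) := hfin



lemma sum_moment_aux {Ω : Type} [MeasurableSpace Ω] {μ : Measure Ω} [IsProbabilityMeasure μ]
    {a : ℝ} (ha : 0 < a) {m : ℕ} (hm : 0 < m) {X : Fin m → Ω → ℝ} {g : Fin m → Ω → ℝ}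
    (hX : ∀ i, Measurable (X i)) (hindep : iIndepFun X μ)
    (hXg : ∀ i ω, X i ω ^ 2 ≤ g i ω) (hg0 : ∀ i ω, 0 ≤ g i ω)
    (hgint : ∀ i, Integrable (fun ω => Real.exp (a * g i ω)) μ)
    (hg2 : ∀ i, ∫ ω, Real.exp (a * g i ω) ∂μ ≤ 2)
    (hXint : ∀ i, Integrable (X i) μ) (hX0 : ∀ i, ∫ ω, X i ω ∂μ = 0)
    (p : ℕ) (hp : 1 ≤ p) :
    Integrable (fun ω => (∑ i, X i ω) ^ (2 * p)) μ ∧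
      ∫ ω, (∑ i, X i ω) ^ (2 * p) ∂μ ≤ p.factorial * (64 * Real.exp 1 / a * m) ^ p := by
  have hmgf := fun (s : ℝ) (i : Fin m) =>
    mgf_aux ha (hX i) (hXg i) (hg0 i) (hgint i) (hg2 i) (hXint i) (hX0 i) s
  set c : ℝ := 8 / a with hc
  have hc0 : 0 < c := by positivity
  set t : ℝ := Real.sqrt (p / (c * m)) with htdef
  have hm0 : (0:ℝ) < m := by exact_mod_cast hm
  have hp0 : (0:ℝ) < p := by exact_mod_cast hp
  have ht2 : t ^ 2 = p / (c * m) := Real.sq_sqrt (by positivity)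
  have ht0 : 0 < t := Real.sqrt_pos.2 (by positivity)
  -- integrability of exp (s * sum)
  have hSint : ∀ s : ℝ, Integrable (fun ω => Real.exp (s * (∑ i, X i) ω)) μ := fun s =>
    hindep.integrable_exp_mul_sum hX (fun i _ => (hmgf s i).1)
  -- mgf bound for the sum
  have hmgfS : ∀ s : ℝ, mgf (∑ i, X i) μ s ≤ Real.exp (c * s ^ 2 * m) := by
    intro s
    rw [hindep.mgf_sum hX Finset.univ]
    calc ∏ i, mgf (X i) μ s ≤ ∏ _i : Fin m, Real.exp (c * s ^ 2) :=
          Finset.prod_le_prod (fun i _ => mgf_nonneg) (fun i _ => by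
            have h := (hmgf s i).2
            rw [hc]
            exact h)
      _ = Real.exp (c * s ^ 2) ^ m := by rw [Finset.prod_const, Finset.card_univ,
            Fintype.card_fin]
      _ = Real.exp (c * s ^ 2 * m) := by rw [← Real.exp_nat_mul]; ring_nf
  -- pointwise moment bound
  have hkey : ∀ ω, (∑ i, X i ω) ^ (2 * p) ≤ (2 * p).factorial / t ^ (2 * p) *
      (Real.exp (t * (∑ i, X i) ω) + Real.exp (-t * (∑ i, X i) ω)) := by
    intro ω
    set S := (∑ i, X i) ω with hS
    have hSω : S = ∑ i, X i ω := by simp [hS]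
    have h1 : |t * S| ^ (2 * p) / (2 * p).factorial ≤ Real.exp |t * S| :=
      Real.pow_div_factorial_le_exp _ (abs_nonneg _) (2 * p)
    have h2 : Real.exp |t * S| ≤ Real.exp (t * S) + Real.exp (-t * S) := by
      rcases le_or_gt 0 (t * S) with h | h
      · rw [abs_of_nonneg h]; have := (Real.exp_pos (-t * S)).le; linarith
      · rw [abs_of_neg h]; have := (Real.exp_pos (t * S)).le
        have : Real.exp (-(t * S)) = Real.exp (-t * S) := by ring_nf
        rw [this]; linarith [(Real.exp_pos (t * S)).le]
    have h3 : |t * S| ^ (2 * p) = t ^ (2 * p) * S ^ (2 * p) := by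
      rw [abs_mul, mul_pow, (even_two_mul p).pow_abs, (even_two_mul p).pow_abs]
    have ht2p : 0 < t ^ (2 * p) := pow_pos ht0 _
    rw [hSω] at h1 h3 ⊢
    rw [div_mul_eq_mul_div, le_div_iff₀ ht2p]
    calc (∑ i, X i ω) ^ (2 * p) * t ^ (2 * p)
        = |t * ∑ i, X i ω| ^ (2 * p) := by rw [h3]; ring
      _ ≤ (2 * p).factorial * Real.exp |t * ∑ i, X i ω| := by
          have h4 := (div_le_iff₀ (by positivity : (0:ℝ) < ((2 * p).factorial : ℝ))).1 h1
          linarith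
      _ ≤ (2 * p).factorial * (Real.exp (t * ∑ i, X i ω) + Real.exp (-t * ∑ i, X i ω)) := by
          apply mul_le_mul_of_nonneg_left _ (by positivity)
          rw [← hSω]; exact h2
  -- integrability of the dominating function
  have hRHSint : Integrable (fun ω => ((2 * p).factorial : ℝ) / t ^ (2 * p) *
      (Real.exp (t * (∑ i, X i) ω) + Real.exp (-t * (∑ i, X i) ω))) μ :=
    ((hSint t).add (hSint (-t))).const_mul _
  have hSmeas : Measurable fun ω => (∑ i, X i ω) ^ (2 * p) :=
    (Finset.measurable_sum Finset.univ (fun i _ => hX i)).pow_const _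
  have hSpow_nonneg : ∀ ω, 0 ≤ (∑ i, X i ω) ^ (2 * p) := fun ω =>
    (even_two_mul p).pow_nonneg _
  have hSpint : Integrable (fun ω => (∑ i, X i ω) ^ (2 * p)) μ := by
    apply Integrable.mono hRHSint hSmeas.aestronglyMeasurable
    apply Filter.Eventually.of_forall
    intro ω
    rw [Real.norm_eq_abs, Real.norm_eq_abs, abs_of_nonneg (hSpow_nonneg ω),
      abs_of_nonneg (by positivity)]
    exact hkey ω
  refine ⟨hSpint, ?_⟩
  have hmono := integral_mono hSpint hRHSint hkey
  rw [integral_const_mul, integral_add (hSint t) (hSint (-t))] at hmono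
  have hmgf_t : ∫ ω, Real.exp (t * (∑ i, X i) ω) ∂μ ≤ Real.exp (c * t ^ 2 * ↑m) := hmgfS t
  have hmgf_t' : ∫ ω, Real.exp (-t * (∑ i, X i) ω) ∂μ ≤ Real.exp (c * t ^ 2 * ↑m) := by
    have h := hmgfS (-t)
    rw [neg_sq] at h
    exact h
  have hN0 : (0:ℝ) < ((2 * p).factorial : ℝ) := by exact_mod_cast (2 * p).factorial_pos
  have hbound : ∫ ω, (∑ i, X i ω) ^ (2 * p) ∂μ ≤
      ((2 * p).factorial : ℝ) / t ^ (2 * p) * (2 * Real.exp (c * t ^ 2 * ↑m)) := by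
    refine hmono.trans ?_
    have h2 : (2:ℝ) * Real.exp (c * t ^ 2 * ↑m) = Real.exp (c * t ^ 2 * ↑m) +
        Real.exp (c * t ^ 2 * ↑m) := by ring
    rw [h2]
    apply mul_le_mul_of_nonneg_left (add_le_add hmgf_t hmgf_t') (by positivity)
  refine hbound.trans ?_
  -- arithmetic
  set F : ℝ := (p.factorial : ℝ) with hF
  have hF1 : (1:ℝ) ≤ F := by
    rw [hF]; exact_mod_cast p.factorial_pos
  have hN : ((2 * p).factorial : ℝ) ≤ 4 ^ p * F * F := by
    rw [hF]
    have := aux_fact p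
    push_cast
    exact_mod_cast this
  have hFp : F ≤ (p:ℝ) ^ p := by
    rw [hF, show ((p:ℝ) ^ p) = ((p ^ p : ℕ) : ℝ) by push_cast; ring]
    exact_mod_cast p.factorial_le_pow
  set A : ℝ := c * ↑m with hA
  have hA0 : (0:ℝ) < A := by positivity
  set E : ℝ := Real.exp 1 with hE
  have hE0 : (0:ℝ) < E := Real.exp_pos 1
  have hctm : c * t ^ 2 * ↑m = (p:ℝ) := by
    rw [ht2]
    field_simp
    ring
  have hexp : Real.exp (c * t ^ 2 * ↑m) = E ^ p := by
    rw [hctm, hE, ← Real.exp_nat_mul, mul_one]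
  have htp : t ^ (2 * p) = ((p:ℝ) / A) ^ p := by rw [pow_mul, ht2]
  rw [hexp, htp]
  have hkey2 : ((2 * p).factorial : ℝ) / ((p:ℝ) / A) ^ p * (2 * E ^ p)
      = 2 * ((2 * p).factorial : ℝ) * A ^ p * E ^ p / (p:ℝ) ^ p := by
    rw [div_pow]
    field_simp
  rw [hkey2]
  have hpp0 : (0:ℝ) < (p:ℝ) ^ p := by positivity
  have step1 : 2 * ((2 * p).factorial : ℝ) * A ^ p * E ^ p / (p:ℝ) ^ p
      ≤ 2 * (4 ^ p * F * F) * A ^ p * E ^ p / (p:ℝ) ^ p := by gcongr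
  have step2 : 2 * ((4:ℝ) ^ p * F * F) * A ^ p * E ^ p / (p:ℝ) ^ p
      = 2 * 4 ^ p * A ^ p * E ^ p * F * (F / (p:ℝ) ^ p) := by ring
  have step3 : F / (p:ℝ) ^ p ≤ 1 := (div_le_one hpp0).2 hFp
  have step4 : 2 * (4:ℝ) ^ p * A ^ p * E ^ p * F * (F / (p:ℝ) ^ p)
      ≤ 2 * 4 ^ p * A ^ p * E ^ p * F * 1 := by
    apply mul_le_mul_of_nonneg_left step3 (by positivity)
  have h2p : (2:ℝ) ≤ 2 ^ p := by
    calc (2:ℝ) = 2 ^ 1 := (pow_one 2).symm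
      _ ≤ 2 ^ p := pow_le_pow_right₀ one_le_two hp
  have step5 : 2 * (4:ℝ) ^ p * A ^ p * E ^ p * F ≤ (8 * A * E) ^ p * F := by
    have h8 : ((8:ℝ) * A * E) ^ p = 2 ^ p * (4 ^ p * A ^ p * E ^ p) := by
      rw [mul_pow, mul_pow, show ((8:ℝ) ^ p) = 2 ^ p * 4 ^ p by
        rw [← mul_pow]; norm_num]
      ring
    rw [h8]
    have : 2 * ((4:ℝ) ^ p * A ^ p * E ^ p) ≤ 2 ^ p * (4 ^ p * A ^ p * E ^ p) := by
      apply mul_le_mul_of_nonneg_right h2p (by positivity)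
    nlinarith [this, hF1]
  have heq : ((8:ℝ) * A * E) ^ p = (64 * E / a * ↑m) ^ p := by
    congr 1
    rw [hA, hc, hE]
    ring
  calc 2 * ((2 * p).factorial : ℝ) * A ^ p * E ^ p / (p:ℝ) ^ p
      ≤ 2 * (4 ^ p * F * F) * A ^ p * E ^ p / (p:ℝ) ^ p := step1
    _ = 2 * 4 ^ p * A ^ p * E ^ p * F * (F / (p:ℝ) ^ p) := step2
    _ ≤ 2 * 4 ^ p * A ^ p * E ^ p * F * 1 := step4
    _ = 2 * 4 ^ p * A ^ p * E ^ p * F := by ring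
    _ ≤ (8 * A * E) ^ p * F := step5
    _ = F * (64 * E / a * ↑m) ^ p := by rw [heq]; ring



/-- for i.i.d. centered `ℝ^d`-valued random variables with
`E[exp(a|Y₁|²)] ≤ 2`, there is a constant `β > 0` depending only on `a` and `d`
(not on `m`) such that `E[|Y₁ + ⋯ + Y_m|^{2p}] ≤ p! (β m)^p`. -/
theorem iid_even_moment_bound (d : ℕ) (a : ℝ) (ha : 0 < a) :
    ∃ β : ℝ, 0 < β ∧
      ∀ (Ω : Type) (_ : MeasurableSpace Ω) (μ : Measure Ω), IsProbabilityMeasure μ →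
        ∀ (m : ℕ) (Y : Fin m → Ω → EuclideanSpace ℝ (Fin d)),
          (∀ i, Measurable (Y i)) →
          iIndepFun Y μ →
          (∀ i j, IdentDistrib (Y i) (Y j) μ μ) →
          (∀ i, Integrable (Y i) μ) →
          (∀ i, ∫ ω, Y i ω ∂μ = 0) →
          (∀ i, ∫⁻ ω, ENNReal.ofReal (Real.exp (a * ‖Y i ω‖ ^ 2)) ∂μ ≤ 2) →
          ∀ p : ℕ, 1 ≤ p →
            ∫⁻ ω, ENNReal.ofReal (‖∑ i, Y i ω‖ ^ (2 * p)) ∂μ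
              ≤ ENNReal.ofReal (p.factorial * (β * m) ^ p) := by
  refine ⟨64 * Real.exp 1 * (d + 1) / a, by positivity, ?_⟩
  intro Ω mΩ μ hμ m Y hYmeas hindep _hId hYint hY0 hYexp p hp
  rcases Nat.eq_zero_or_pos m with rfl | hm
  · have : ∀ ω : Ω, (∑ i : Fin 0, Y i ω) = 0 := fun ω => by simp
    simp only [this, norm_zero, zero_pow (by omega : 2 * p ≠ 0), ENNReal.ofReal_zero,
      lintegral_const, zero_mul]
    exact zero_le
  rcases Nat.eq_zero_or_pos d with rfl | hd
  · have : ∀ ω : Ω, ‖∑ i, Y i ω‖ = 0 := fun ω => by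
      rw [Subsingleton.elim (∑ i, Y i ω) (0 : EuclideanSpace ℝ (Fin 0)), norm_zero]
    simp only [this, zero_pow (by omega : 2 * p ≠ 0), ENNReal.ofReal_zero,
      lintegral_const, zero_mul]
    exact zero_le
  -- main case
  have hnorm_sq : ∀ (v : EuclideanSpace ℝ (Fin d)), ‖v‖ ^ 2 = ∑ k, (v k) ^ 2 := by
    intro v
    rw [EuclideanSpace.norm_eq, Real.sq_sqrt (Finset.sum_nonneg fun i _ => by positivity)]
    congr 1
    ext k
    rw [Real.norm_eq_abs, sq_abs]
  have hXmeas : ∀ (k : Fin d) (i : Fin m), Measurable fun ω => Y i ω k := fun k i =>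
    (EuclideanSpace.proj (𝕜 := ℝ) k).continuous.measurable.comp (hYmeas i)
  have hgmeas : ∀ i : Fin m, Measurable fun ω => ‖Y i ω‖ ^ 2 := fun i =>
    (hYmeas i).norm.pow_const 2
  have hgfacts := fun i : Fin m => exp_sq_integrable (hgmeas i) (hYexp i)
  have hXg : ∀ (k : Fin d) (i : Fin m) (ω : Ω), (Y i ω k) ^ 2 ≤ ‖Y i ω‖ ^ 2 := by
    intro k i ω
    rw [hnorm_sq]
    exact Finset.single_le_sum (f := fun j : Fin d => Y i ω j ^ 2)
      (fun j _ => sq_nonneg _) (Finset.mem_univ k)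
  have hindepk : ∀ k : Fin d,
      iIndepFun (fun i => fun ω => Y i ω k) μ := by
    intro k
    exact hindep.comp (fun _ v => v k) (fun _ => (EuclideanSpace.proj (𝕜 := ℝ) k).continuous.measurable)
  have hXint : ∀ (k : Fin d) (i : Fin m), Integrable (fun ω => Y i ω k) μ := fun k i =>
    (EuclideanSpace.proj (𝕜 := ℝ) k).integrable_comp (hYint i)
  have hX0 : ∀ (k : Fin d) (i : Fin m), ∫ ω, Y i ω k ∂μ = 0 := by
    intro k i
    have h := (EuclideanSpace.proj (𝕜 := ℝ) k).integral_comp_comm (hYint i)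
    rw [hY0 i] at h
    simpa using h
  have hk := fun k : Fin d =>
    sum_moment_aux ha hm (X := fun i ω => Y i ω k) (g := fun i ω => ‖Y i ω‖ ^ 2)
      (hXmeas k) (hindepk k) (hXg k) (fun i ω => sq_nonneg _)
      (fun i => (hgfacts i).1) (fun i => (hgfacts i).2) (hXint k) (hX0 k) p hp
  obtain ⟨q, rfl⟩ : ∃ q, p = q + 1 := ⟨p - 1, by omega⟩
  set p := q + 1 with hpdef
  have hcoord : ∀ (ω : Ω) (k : Fin d), (∑ i, Y i ω) k = ∑ i, Y i ω k := by
    intro ω k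
    exact map_sum (EuclideanSpace.proj (𝕜 := ℝ) k) (fun i => Y i ω) Finset.univ
  have hd0 : (0:ℝ) < (d:ℝ) ^ q := by positivity
  have hpt : ∀ ω, ‖∑ i, Y i ω‖ ^ (2 * p) ≤
      (d:ℝ) ^ q * ∑ k, (∑ i, Y i ω k) ^ (2 * p) := by
    intro ω
    have h1 : ‖∑ i, Y i ω‖ ^ (2 * p) = (∑ k, (∑ i, Y i ω k) ^ 2) ^ p := by
      rw [pow_mul, hnorm_sq]
      congr 1
      exact Finset.sum_congr rfl fun k _ => by rw [hcoord]
    rw [h1]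
    have h2 := pow_sum_div_card_le_sum_pow (s := Finset.univ)
      (f := fun k : Fin d => (∑ i, Y i ω k) ^ 2) (fun k _ => sq_nonneg _) q
    rw [Finset.card_univ, Fintype.card_fin] at h2
    have h3 : (∑ k, (∑ i, Y i ω k) ^ 2) ^ p ≤ (d:ℝ) ^ q *
        ∑ k, ((∑ i, Y i ω k) ^ 2) ^ p := by
      rw [mul_comm]
      exact (div_le_iff₀ hd0).1 h2
    refine h3.trans ?_
    apply le_of_eq
    congr 1
    exact Finset.sum_congr rfl fun k _ => by rw [← pow_mul]
  have hRHSint : Integrable (fun ω => (d:ℝ) ^ q * ∑ k, (∑ i, Y i ω k) ^ (2 * p)) μ :=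
    (integrable_finset_sum Finset.univ fun k _ => (hk k).1).const_mul _
  have hSmeas : Measurable fun ω => ‖∑ i, Y i ω‖ ^ (2 * p) :=
    ((Finset.measurable_sum Finset.univ fun i _ => hYmeas i).norm).pow_const _
  have hLHSint : Integrable (fun ω => ‖∑ i, Y i ω‖ ^ (2 * p)) μ := by
    apply Integrable.mono hRHSint hSmeas.aestronglyMeasurable
    apply Filter.Eventually.of_forall
    intro ω
    rw [Real.norm_eq_abs, Real.norm_eq_abs, abs_of_nonneg (by positivity),
      abs_of_nonneg]
    · exact hpt ω
    · exact mul_nonneg (by positivity) (Finset.sum_nonneg fun k _ =>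
        (even_two_mul p).pow_nonneg _)
  have hmono := integral_mono hLHSint hRHSint hpt
  rw [integral_const_mul, integral_finset_sum Finset.univ (fun k _ => (hk k).1)] at hmono
  have hsum_le : ∑ k : Fin d, ∫ ω, (∑ i, Y i ω k) ^ (2 * p) ∂μ ≤
      (d:ℝ) * (p.factorial * (64 * Real.exp 1 / a * m) ^ p) := by
    calc ∑ k : Fin d, ∫ ω, (∑ i, Y i ω k) ^ (2 * p) ∂μ
        ≤ ∑ _k : Fin d, (p.factorial * (64 * Real.exp 1 / a * m) ^ p : ℝ) :=
          Finset.sum_le_sum fun k _ => (hk k).2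
      _ = (d:ℝ) * (p.factorial * (64 * Real.exp 1 / a * m) ^ p) := by
          rw [Finset.sum_const, Finset.card_univ, Fintype.card_fin, nsmul_eq_mul]
  have hfinal : ∫ ω, ‖∑ i, Y i ω‖ ^ (2 * p) ∂μ ≤
      (p.factorial : ℝ) * (64 * Real.exp 1 * (d + 1) / a * m) ^ p := by
    refine hmono.trans ?_
    have h4 : (d:ℝ) ^ q * ((d:ℝ) * (p.factorial * (64 * Real.exp 1 / a * m) ^ p)) =
        (p.factorial : ℝ) * ((d:ℝ) ^ p * (64 * Real.exp 1 / a * m) ^ p) := by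
      rw [hpdef]; ring
    calc (d:ℝ) ^ q * ∑ k : Fin d, ∫ ω, (∑ i, Y i ω k) ^ (2 * p) ∂μ
        ≤ (d:ℝ) ^ q * ((d:ℝ) * (p.factorial * (64 * Real.exp 1 / a * m) ^ p)) :=
          mul_le_mul_of_nonneg_left hsum_le (by positivity)
      _ = (p.factorial : ℝ) * ((d:ℝ) ^ p * (64 * Real.exp 1 / a * m) ^ p) := h4
      _ = (p.factorial : ℝ) * ((d:ℝ) * (64 * Real.exp 1 / a * m)) ^ p := by
          ring
      _ ≤ (p.factorial : ℝ) * (64 * Real.exp 1 * (d + 1) / a * m) ^ p := by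
          apply mul_le_mul_of_nonneg_left _ (by positivity)
          apply pow_le_pow_left₀ (by positivity)
          calc (d:ℝ) * (64 * Real.exp 1 / a * m) = 64 * Real.exp 1 * (d:ℝ) / a * m := by
                ring
            _ ≤ 64 * Real.exp 1 * ((d:ℝ) + 1) / a * m := by gcongr <;> linarith
  -- convert to lintegral
  have hnn : 0 ≤ᵐ[μ] fun ω => ‖∑ i, Y i ω‖ ^ (2 * p) :=
    Filter.Eventually.of_forall fun ω => by positivity
  rw [← ofReal_integral_eq_lintegral_ofReal hLHSint hnn]
  apply ENNReal.ofReal_le_ofReal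
  have hcast : ((d:ℝ) + 1) = ((d + 1 : ℕ) : ℝ) := by push_cast; ring
  calc ∫ ω, ‖∑ i, Y i ω‖ ^ (2 * p) ∂μ
      ≤ (p.factorial : ℝ) * (64 * Real.exp 1 * (d + 1) / a * m) ^ p := hfinal
    _ = (p.factorial : ℝ) * (64 * Real.exp 1 * (d + 1) / a * m) ^ p := by rw [hcast]
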